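/- Let f : X → Y be a compact-preserving function from a topological space X to a Hausdorff space Y, let (x_n) be a sequence converging to x ∈ X with the values f(x_n) pairwise distinct. Then f(x) is the unique non-isolated point (accumulation point) of the compact set f({x} ∪ {x_n : n ∈ ℕ}). -/

import Mathlib

open Filter Topology Set

def CompactPreserving {X Y : Type*} [TopologicalSpace X] [TopologicalSpace Y]
    (f : X → Y) : Prop := ∀ K : Set X, IsCompact K → IsCompact (f '' K)

theorem stmt15 {X Y : Type*} [TopologicalSpace X] [TopologicalSpace Y] [T2Space Y]
    (f : X → Y) (hf : CompactPreserving f) (u : ℕ → X) (x : X)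
    (hu : Filter.Tendsto u Filter.atTop (𝓝 x))
    (hinj : ∀ n m : ℕ, n ≠ m → f (u n) ≠ f (u m)) :
    IsCompact (f '' (insert x (Set.range u))) ∧
    f x ∈ f '' (insert x (Set.range u)) ∧
    ∀ y ∈ f '' (insert x (Set.range u)),
      (y ∈ closure (f '' (insert x (Set.range u)) \ {y}) ↔ y = f x) := by
  set S : Set Y := f '' (insert x (Set.range u)) with hS
  have hKc : IsCompact (insert x (Set.range u)) := hu.isCompact_insert_range
  have hSc : IsCompact S := hf _ hKc
  have hfx : f x ∈ S := ⟨x, Set.mem_insert _ _, rfl⟩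
  refine ⟨hSc, hfx, ?_⟩
  -- S is infinite
  have hfu_inj : Function.Injective (f ∘ u) := fun n m h => by
    by_contra hne; exact hinj n m hne h
  have hSinf : S.Infinite :=
    (Set.infinite_range_of_injective hfu_inj).mono
      (by rintro _ ⟨n, rfl⟩; exact ⟨u n, Set.mem_insert_iff.mpr (Or.inr ⟨n, rfl⟩), rfl⟩)
  -- every point of S other than f x is isolated in S
  have hiso : ∀ n : ℕ, f (u n) ≠ f x → f (u n) ∉ closure (S \ {f (u n)}) := by
    intro n hne
    set v : ℕ → X := fun m => u (if m < n then m else m + 1) with hv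
    have hvt : Tendsto v atTop (𝓝 x) := by
      refine hu.comp (tendsto_atTop_mono (fun m => ?_) tendsto_id)
      simp only [id]; split <;> omega
    have hK'c : IsCompact (f '' insert x (Set.range v)) := hf _ hvt.isCompact_insert_range
    have hsub : S \ {f (u n)} ⊆ f '' insert x (Set.range v) := by
      rintro _ ⟨⟨z, hz, rfl⟩, hzne⟩
      rcases hz with rfl | ⟨m, rfl⟩
      · exact ⟨z, Set.mem_insert _ _, rfl⟩
      · have hmn : m ≠ n := fun h => hzne (by rw [h]; rfl)
        rcases lt_or_gt_of_ne hmn with h | h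
        · exact ⟨v m, Set.mem_insert_iff.mpr (Or.inr ⟨m, rfl⟩), by simp [hv, h]⟩
        · refine ⟨v (m - 1), Set.mem_insert_iff.mpr (Or.inr ⟨m - 1, rfl⟩), ?_⟩
          have : ¬ (m - 1 < n) := by omega
          simp only [hv, this, if_false]
          have h2 : m - 1 + 1 = m := by omega
          rw [h2]
    have hni : f (u n) ∉ f '' insert x (Set.range v) := by
      rintro ⟨z, hz, hzeq⟩
      rcases hz with rfl | ⟨m, rfl⟩
      · exact hne hzeq.symm
      · have : (if m < n then m else m + 1) ≠ n := by split <;> omega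
        exact hinj _ _ this hzeq
    intro hcl
    exact hni (hK'c.isClosed.closure_subset_iff.mpr hsub hcl)
  intro y hy
  constructor
  · -- accumulation → y = f x
    intro hcl
    by_contra hne
    obtain ⟨z, hz, rfl⟩ := hy
    rcases hz with rfl | ⟨n, rfl⟩
    · exact hne rfl
    · exact hiso n hne hcl
  · rintro rfl
    by_contra hcl
    -- then S is discrete, hence finite, contradiction
    have hdisc : DiscreteTopology S := by
      rw [discreteTopology_subtype_iff]
      intro z hz
      have hz' : z ∉ closure (S \ {z}) := by
        obtain ⟨w, hw, rfl⟩ := hz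
        rcases hw with rfl | ⟨n, rfl⟩
        · exact hcl
        · by_cases h : f (u n) = f x
          · rw [h]; exact hcl
          · exact hiso n h
      rw [mem_closure_iff_nhdsWithin_neBot, not_neBot] at hz'
      rw [← hz']
      simp [nhdsWithin, Set.diff_eq, inf_assoc, inf_comm (𝓟 {z}ᶜ)]
    exact hSinf (hSc.finite (isDiscrete_iff_discreteTopology.mpr hdisc))
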